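/- Let m = 2k+1 be an odd positive integer. For all graphs G and H, there exists a homomorphism of Γ_m(G) to H if and only if there exists a homomorphism of G to Ω_m(H). -/

import Mathlib

/-- A graph: a vertex set together with a symmetric adjacency relation (loops allowed). -/
structure LoopGraph where
  V : Type
  Adj : V → V → Prop
  symm : ∀ ⦃u v⦄, Adj u v → Adj v u

/-- `Γ_m(G)`: the graph on the vertex set of `G` in which `u ~ v` iff `G` contains a walk
of length exactly `m` from `u` to `v`. -/
def GammaM (m : ℕ) (G : LoopGraph) : LoopGraph where
  V := G.V
  Adj u v := ∃ w : ℕ → G.V, w 0 = u ∧ w m = v ∧ ∀ i < m, G.Adj (w i) (w (i + 1))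
  symm := by
    rintro u v ⟨w, h0, hm, hw⟩
    refine ⟨fun i => w (m - i), by simpa using hm, by simpa using h0, ?_⟩
    intro i hi
    have h1 : m - i - 1 + 1 = m - i := by omega
    have h2 : m - (i + 1) = m - i - 1 := by omega
    have := hw (m - i - 1) (by omega)
    rw [h1] at this
    simp only [h2]
    exact G.symm this

/-- Two sets of vertices are completely joined if every vertex of one is adjacent to every
vertex of the other. -/
def CJ (H : LoopGraph) (A B : Set H.V) : Prop := ∀ a ∈ A, ∀ b ∈ B, H.Adj a b

/-- The extended tuple `(U₀, U₁, …, U_k)` with `U₀ = {u}`. -/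
def extT (H : LoopGraph) (u : H.V) {k : ℕ} (U : Fin k → Set H.V) : Fin (k + 1) → Set H.V :=
  Fin.cases {u} U

/-- The vertices of `Ω_{2k+1}(H)`: the `(k+1)`-tuples `(u, U₁, …, U_k)` with `u ∈ V(H)`,
`U₁` a subset of the neighbourhood of `u` in `H` (that is, `{u}` completely joined to
`U₁`), and each `U_i` completely joined to `U_{i-1}` for `i = 2, …, k`. -/
def OmegaVert (H : LoopGraph) (k : ℕ) : Type :=
  {p : H.V × (Fin k → Set H.V) //
    ∀ i : Fin k, CJ H (extT H p.1 p.2 i.castSucc) (extT H p.1 p.2 i.succ)}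

/-- `Ω_{2k+1}(H)`: two tuples `(u, U₁, …, U_k)` and `(v, V₁, …, V_k)` are adjacent iff
`u ∈ V₁`, `v ∈ U₁`, `U_{i-1} ⊆ V_i` and `V_{i-1} ⊆ U_i` for `i = 2, …, k`, and `U_k` is
completely joined to `V_k` (with the convention `U₀ = {u}`, `V₀ = {v}`, the first two
conditions are the subset conditions for `i = 1`). -/
def OmegaM (k : ℕ) (H : LoopGraph) : LoopGraph where
  V := OmegaVert H k
  Adj p q :=
    (∀ i : Fin k, extT H p.1.1 p.1.2 i.castSucc ⊆ extT H q.1.1 q.1.2 i.succ ∧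
                  extT H q.1.1 q.1.2 i.castSucc ⊆ extT H p.1.1 p.1.2 i.succ) ∧
    CJ H (extT H p.1.1 p.1.2 (Fin.last k)) (extT H q.1.1 q.1.2 (Fin.last k))
  symm := by
    rintro p q ⟨h1, h2⟩
    exact ⟨fun i => ⟨(h1 i).2, (h1 i).1⟩, fun a ha b hb => H.symm (h2 b hb a ha)⟩

/-- A walk of length exactly `n` from `a` to `b` in `G`. -/
def WalkN (G : LoopGraph) (n : ℕ) (a b : G.V) : Prop :=
  ∃ w : ℕ → G.V, w 0 = a ∧ w n = b ∧ ∀ i < n, G.Adj (w i) (w (i + 1))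

lemma walk_zero {G : LoopGraph} {a b : G.V} : WalkN G 0 a b ↔ a = b := by
  constructor
  · rintro ⟨w, h0, hn, -⟩; rw [← h0, ← hn]
  · rintro rfl; exact ⟨fun _ => a, rfl, rfl, by omega⟩

lemma walk_one {G : LoopGraph} {a b : G.V} (h : G.Adj a b) : WalkN G 1 a b := by
  refine ⟨fun i => if i = 0 then a else b, by simp, by simp, ?_⟩
  intro i hi
  interval_cases i
  simpa using h

lemma walk_rev {G : LoopGraph} {n : ℕ} {a b : G.V} (h : WalkN G n a b) : WalkN G n b a := by
  obtain ⟨w, h0, hm, hw⟩ := h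
  refine ⟨fun i => w (n - i), by simpa using hm, by simpa using h0, ?_⟩
  intro i hi
  have h1 : n - i - 1 + 1 = n - i := by omega
  have h2 : n - (i + 1) = n - i - 1 := by omega
  have := hw (n - i - 1) (by omega)
  rw [h1] at this
  simp only [h2]
  exact G.symm this

lemma walk_concat {G : LoopGraph} {n p : ℕ} {a b c : G.V} (h1 : WalkN G n a b)
    (h2 : WalkN G p b c) : WalkN G (n + p) a c := by
  obtain ⟨w, hw0, hwn, hw⟩ := h1
  obtain ⟨v, hv0, hvp, hv⟩ := h2
  refine ⟨fun i => if i ≤ n then w i else v (i - n), by simp [hw0], ?_, ?_⟩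
  · by_cases hp : p = 0
    · subst hp
      simp only [Nat.add_zero, le_refl, if_pos]
      rw [hwn, ← hv0, hvp]
    · have : ¬ (n + p ≤ n) := by omega
      simp only [this, if_neg, if_false]
      rw [Nat.add_sub_cancel_left, hvp]
  · intro i hi
    by_cases h1' : i + 1 ≤ n
    · have h2' : i ≤ n := by omega
      simp only [h1', h2', if_pos]
      exact hw i (by omega)
    · by_cases h3' : i ≤ n
      · have hin : i = n := by omega
        subst hin
        simp only [le_refl, if_pos, h1', if_neg, if_false]
        have e : i + 1 - i = 1 := by omega
        rw [e, hwn, ← hv0]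
        exact hv 0 (by omega)
      · simp only [h3', h1', if_neg, if_false]
        have e : i + 1 - n = (i - n) + 1 := by omega
        rw [e]
        exact hv (i - n) (by omega)

lemma walk_pad2 {G : LoopGraph} {n : ℕ} {a b : G.V} (hn : 1 ≤ n) (h : WalkN G n a b) :
    WalkN G (n + 2) a b := by
  obtain ⟨w, h0, hm, hw⟩ := h
  have e : G.Adj a (w 1) := h0 ▸ hw 0 hn
  have := walk_concat (walk_concat (walk_one e) (walk_rev (walk_one e))) ⟨w, h0, hm, hw⟩
  exact (by omega : 1 + 1 + n = n + 2) ▸ this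

lemma walk_pad {G : LoopGraph} {n : ℕ} {a b : G.V} (hn : 1 ≤ n) (h : WalkN G n a b) :
    ∀ t, WalkN G (n + 2 * t) a b := by
  intro t
  induction t with
  | zero => simpa using h
  | succ t ih =>
      have := walk_pad2 (by omega) ih
      exact (by omega : n + 2 * t + 2 = n + 2 * (t + 1)) ▸ this

/-- For odd `m = 2k+1` and all graphs `G`, `H`, there is a homomorphism `Γ_m(G) → H`
iff there is a homomorphism `G → Ω_m(H)`. -/
theorem gammaM_omegaM_adjunction (m k : ℕ) (hm : m = 2 * k + 1) (G H : LoopGraph) :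
    Nonempty ((GammaM m G).Adj →r H.Adj) ↔ Nonempty (G.Adj →r (OmegaM k H).Adj) := by
  subst hm
  constructor
  · rintro ⟨f⟩
    -- key: a walk of length 2k+1 gives adjacency under f
    have walkAdj : ∀ {x y : G.V}, WalkN G (2 * k + 1) x y → H.Adj (f x) (f y) := by
      intro x y h
      exact f.map_rel h
    set U : G.V → Fin k → Set H.V :=
      fun u i => {b | ∃ x, WalkN G ((i : ℕ) + 1) u x ∧ f x = b} with hU
    have hmem : ∀ (u : G.V) (j : Fin (k + 1)) (b : H.V),
        b ∈ extT H (f u) (U u) j ↔ ∃ x, WalkN G (j : ℕ) u x ∧ f x = b := by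
      intro u j b
      induction j using Fin.cases with
      | zero =>
          simp only [extT, Fin.cases_zero, Set.mem_singleton_iff, Fin.val_zero, walk_zero]
          constructor
          · rintro rfl; exact ⟨u, rfl, rfl⟩
          · rintro ⟨x, rfl, rfl⟩; rfl
      | succ i =>
          simp only [extT, Fin.cases_succ, Fin.val_succ, hU, Set.mem_setOf_eq]
    have hcj : ∀ u : G.V, ∀ i : Fin k,
        CJ H (extT H (f u) (U u) i.castSucc) (extT H (f u) (U u) i.succ) := by
      intro u i a ha b hb
      rw [hmem u i.castSucc a] at ha
      rw [hmem u i.succ b] at hb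
      obtain ⟨x, hx, rfl⟩ := ha
      obtain ⟨y, hy, rfl⟩ := hb
      rw [Fin.coe_castSucc] at hx
      rw [Fin.val_succ] at hy
      have hxy := walk_concat (walk_rev hx) hy
      have := walk_pad (by omega) hxy (k - (i : ℕ))
      have hlen : (i : ℕ) + ((i : ℕ) + 1) + 2 * (k - (i : ℕ)) = 2 * k + 1 := by
        have := i.isLt; omega
      rw [hlen] at this
      exact walkAdj this
    refine ⟨⟨fun u => ⟨(f u, U u), hcj u⟩, ?_⟩⟩
    intro u v huv
    refine ⟨?_, ?_⟩
    · intro i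
      constructor
      · intro a ha
        rw [hmem u i.castSucc a] at ha
        obtain ⟨x, hx, rfl⟩ := ha
        rw [Fin.coe_castSucc] at hx
        rw [hmem v i.succ (f x), Fin.val_succ]
        refine ⟨x, ?_, rfl⟩
        have := walk_concat (walk_one (G.symm huv)) hx
        exact (by omega : 1 + (i : ℕ) = (i : ℕ) + 1) ▸ this
      · intro a ha
        rw [hmem v i.castSucc a] at ha
        obtain ⟨x, hx, rfl⟩ := ha
        rw [Fin.coe_castSucc] at hx
        rw [hmem u i.succ (f x), Fin.val_succ]
        refine ⟨x, ?_, rfl⟩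
        have := walk_concat (walk_one huv) hx
        exact (by omega : 1 + (i : ℕ) = (i : ℕ) + 1) ▸ this
    · intro a ha b hb
      rw [hmem u (Fin.last k) a] at ha
      rw [hmem v (Fin.last k) b] at hb
      obtain ⟨x, hx, rfl⟩ := ha
      obtain ⟨y, hy, rfl⟩ := hb
      rw [Fin.val_last] at hx hy
      have := walk_concat (walk_concat (walk_rev hx) (walk_one huv)) hy
      exact walkAdj ((by omega : k + 1 + k = 2 * k + 1) ▸ this)
  · rintro ⟨g⟩
    refine ⟨⟨fun u => (g u).1.1, ?_⟩⟩
    rintro u v ⟨w, h0, hm', hw⟩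
    have hadj : ∀ j < 2 * k + 1, (OmegaM k H).Adj (g (w j)) (g (w (j + 1))) :=
      fun j hj => g.map_rel (hw j hj)
    have chainA : ∀ j (hj : j ≤ k),
        (g (w 0)).1.1 ∈ extT H (g (w j)).1.1 (g (w j)).1.2 ⟨j, by omega⟩ := by
      intro j
      induction j with
      | zero =>
          intro _
          have : (⟨0, by omega⟩ : Fin (k + 1)) = 0 := rfl
          rw [this]
          simp [extT]
      | succ j ih =>
          intro hj
          have hj' : j < k := by omega
          have sub := (hadj j (by omega)).1 ⟨j, hj'⟩
          have e1 : (⟨j, hj'⟩ : Fin k).castSucc = ⟨j, by omega⟩ := rfl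
          have e2 : (⟨j, hj'⟩ : Fin k).succ = ⟨j + 1, by omega⟩ := rfl
          rw [e1, e2] at sub
          exact sub.1 (ih (by omega))
    have chainB : ∀ j (hj : j ≤ k),
        (g (w (2 * k + 1))).1.1 ∈
          extT H (g (w (2 * k + 1 - j))).1.1 (g (w (2 * k + 1 - j))).1.2 ⟨j, by omega⟩ := by
      intro j
      induction j with
      | zero =>
          intro _
          have : (⟨0, by omega⟩ : Fin (k + 1)) = 0 := rfl
          rw [this]
          simp [extT]
      | succ j ih =>
          intro hj
          have hj' : j < k := by omega
          have sub := (hadj (2 * k - j) (by omega)).1 ⟨j, hj'⟩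
          have e1 : (⟨j, hj'⟩ : Fin k).castSucc = ⟨j, by omega⟩ := rfl
          have e2 : (⟨j, hj'⟩ : Fin k).succ = ⟨j + 1, by omega⟩ := rfl
          rw [e1, e2] at sub
          have e3 : 2 * k - j + 1 = 2 * k + 1 - j := by omega
          have e4 : 2 * k + 1 - (j + 1) = 2 * k - j := by omega
          rw [e3] at sub
          rw [e4]
          exact sub.2 (ih (by omega))
    have hA := chainA k (le_refl k)
    have hB := chainB k (le_refl k)
    have hcj := (hadj k (by omega)).2
    have e5 : 2 * k + 1 - k = k + 1 := by omega
    rw [e5] at hB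
    have elast : (Fin.last k) = (⟨k, by omega⟩ : Fin (k + 1)) := rfl
    rw [elast] at hcj
    have := hcj _ hA _ hB
    rw [h0, hm'] at this
    exact this
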